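/- Let S ⊆ ℕ be a finite nonempty set. Then for every t > 0, 𝓘(g_S)(t) = 4·E_S(t)/g_S(t)²; equivalently, 4·E_S(t) = g_S(t)·(deriv (deriv g_S)) t + g_S(t)·(deriv g_S t)/t − (deriv g_S t)². -/

import Mathlib

open Real Finset

/-- `g_S(t) = ∑_{e ∈ S} t^(2e)`. -/
noncomputable def gS (S : Finset ℕ) (t : ℝ) : ℝ := ∑ e ∈ S, t ^ (2 * e)

/-- `h_S(t) = ∑_{e ∈ S} e² t^(2e-2)` (the term for `e = 0` being `0`). -/
noncomputable def hS (S : Finset ℕ) (t : ℝ) : ℝ := ∑ e ∈ S, (e : ℝ) ^ 2 * t ^ (2 * e - 2)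

/-- `q_S(t) = ∑_{e ∈ S} e t^(2e-1)` (the term for `e = 0` being `0`). -/
noncomputable def qS (S : Finset ℕ) (t : ℝ) : ℝ := ∑ e ∈ S, (e : ℝ) * t ^ (2 * e - 1)

/-- `E_S(t) = g_S(t) h_S(t) - q_S(t)²`. -/
noncomputable def ES (S : Finset ℕ) (t : ℝ) : ℝ := gS S t * hS S t - qS S t ^ 2

/-- The expected number of real zeros in `(0,1)`, given by the Edelman–Kostlan integral. -/
noncomputable def zS (S : Finset ℕ) : ℝ :=
  (1 / Real.pi) * ∫ t in (0 : ℝ)..1, Real.sqrt (ES S t) / gS S t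

/-- `𝓘(g)(t) = (g'/g)'(t) + g'(t)/(t·g(t))`. -/
noncomputable def IEK (g : ℝ → ℝ) (t : ℝ) : ℝ :=
  deriv (fun s => deriv g s / g s) t + deriv g t / (t * g t)

lemma hasDerivAt_gS (S : Finset ℕ) (s : ℝ) :
    HasDerivAt (gS S) (2 * qS S s) s := by
  have h : HasDerivAt (gS S) (∑ e ∈ S, (↑(2 * e) : ℝ) * s ^ (2 * e - 1)) s := by
    unfold gS
    exact HasDerivAt.fun_sum fun e _ => hasDerivAt_pow (2 * e) s
  convert h using 1
  unfold qS
  rw [Finset.mul_sum]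
  refine Finset.sum_congr rfl fun e _ => ?_
  push_cast
  ring

lemma hasDerivAt_qS (S : Finset ℕ) (s : ℝ) :
    HasDerivAt (qS S) (∑ e ∈ S, (e : ℝ) * ((↑(2 * e - 1) : ℝ) * s ^ (2 * e - 1 - 1))) s := by
  unfold qS
  exact HasDerivAt.fun_sum fun e _ => (hasDerivAt_pow (2 * e - 1) s).const_mul _

lemma deriv_gS (S : Finset ℕ) : deriv (gS S) = fun s => 2 * qS S s :=
  funext fun s => (hasDerivAt_gS S s).deriv

lemma deriv2_gS (S : Finset ℕ) (t : ℝ) (ht : 0 < t) :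
    deriv (deriv (gS S)) t = 4 * hS S t - 2 * qS S t / t := by
  rw [deriv_gS]
  have h : HasDerivAt (fun s => 2 * qS S s)
      (2 * ∑ e ∈ S, (e : ℝ) * ((↑(2 * e - 1) : ℝ) * t ^ (2 * e - 1 - 1))) t :=
    (hasDerivAt_qS S t).const_mul 2
  rw [h.deriv]
  have key : ∑ e ∈ S, (e : ℝ) * ((↑(2 * e - 1) : ℝ) * t ^ (2 * e - 1 - 1))
      = 2 * hS S t - qS S t / t := by
    unfold hS qS
    rw [Finset.mul_sum, Finset.sum_div, ← Finset.sum_sub_distrib]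
    refine Finset.sum_congr rfl fun e _ => ?_
    rcases e with _ | m
    · simp
    · have h1 : 2 * (m + 1) - 1 = 2 * m + 1 := by omega
      have h2 : 2 * (m + 1) - 2 = 2 * m := by omega
      have h3 : 2 * m + 1 - 1 = 2 * m := by omega
      rw [h1, h2, h3]
      have hne : t ≠ 0 := ne_of_gt ht
      field_simp
      push_cast
      ring
  rw [key]
  ring

theorem stmt4 (S : Finset ℕ) (hS : S.Nonempty) (t : ℝ) (ht : 0 < t) :
    IEK (gS S) t = 4 * ES S t / (gS S t) ^ 2 ∧
    4 * ES S t =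
      gS S t * deriv (deriv (gS S)) t + gS S t * deriv (gS S) t / t
        - (deriv (gS S) t) ^ 2 := by
  have hg0 : 0 < gS S t := by
    unfold gS
    exact Finset.sum_pos (fun e _ => pow_pos ht _) hS
  have hgne : gS S t ≠ 0 := ne_of_gt hg0
  have htne : t ≠ 0 := ne_of_gt ht
  have hd1 : deriv (gS S) t = 2 * qS S t := (hasDerivAt_gS S t).deriv
  have hd2 := deriv2_gS S t ht
  have h2 : 4 * ES S t =
      gS S t * deriv (deriv (gS S)) t + gS S t * deriv (gS S) t / t
        - (deriv (gS S) t) ^ 2 := by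
    rw [hd1, hd2]
    unfold ES
    field_simp
    ring
  refine ⟨?_, h2⟩
  unfold IEK
  have hgd : HasDerivAt (gS S) (deriv (gS S) t) t := by
    rw [hd1]; exact hasDerivAt_gS S t
  have hdd : HasDerivAt (deriv (gS S))
      (2 * ∑ e ∈ S, (e : ℝ) * ((↑(2 * e - 1) : ℝ) * t ^ (2 * e - 1 - 1))) t := by
    rw [deriv_gS]
    exact (hasDerivAt_qS S t).const_mul 2
  have hdval : deriv (deriv (gS S)) t
      = 2 * ∑ e ∈ S, (e : ℝ) * ((↑(2 * e - 1) : ℝ) * t ^ (2 * e - 1 - 1)) := hdd.deriv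
  have hq := hdd.div hgd hgne
  rw [show (fun s => deriv (gS S) s / gS S s) = deriv (gS S) / gS S from rfl, hq.deriv, ← hdval, hd2, hd1]
  unfold ES
  field_simp
  ring
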